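/- For every n ∈ ℤ^p, the Möbius function evaluated at n is a valuative function of the polymatroid: for any polymatroids 𝒫_1,…,𝒫_k on [p] with cage m and any integers a_1,…,a_k such that Σ_{i=1}^{k} a_i · 1_{B(𝒫_i)}(v) = 0 for all v ∈ ℝ^p, one has Σ_{i=1}^{k} a_i · μ_{𝒫_i}(n) = 0. -/

import Mathlib

open scoped BigOperators

attribute [local instance] Classical.propDecidable

namespace CavePaper

variable {p : ℕ}

/-- `rk` is the rank function of a polymatroid on `[p]` with cage `m`:
normalized, monotone, submodular, and `rk {i} ≤ m i` for all `i`. -/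
def IsPolymatroid (m : Fin p → ℕ) (rk : Finset (Fin p) → ℕ) : Prop :=
  rk ∅ = 0 ∧
    (∀ J₁ J₂ : Finset (Fin p), J₁ ⊆ J₂ → rk J₁ ≤ rk J₂) ∧
    (∀ J₁ J₂ : Finset (Fin p), rk (J₁ ∩ J₂) + rk (J₁ ∪ J₂) ≤ rk J₁ + rk J₂) ∧
    (∀ i : Fin p, rk {i} ≤ m i)

/-- An integer point lies in the independence polytope `I(𝒫)`. -/
def inIndep (rk : Finset (Fin p) → ℕ) (v : Fin p → ℤ) : Prop :=
  (∀ i, 0 ≤ v i) ∧ ∀ J : Finset (Fin p), ∑ j ∈ J, v j ≤ (rk J : ℤ)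

/-- An integer point lies in the base polytope `B(𝒫)`. -/
def inBase (rk : Finset (Fin p) → ℕ) (v : Fin p → ℤ) : Prop :=
  inIndep rk v ∧ ∑ i, v i = (rk Finset.univ : ℤ)

/-- The indicator function `1_𝒫` of the base polytope, at integer points. -/
noncomputable def baseInd (rk : Finset (Fin p) → ℕ) (v : Fin p → ℤ) : ℤ :=
  if inBase rk v then 1 else 0

/-- `max_{i<j} 1_𝒫(n - e_i + e_j)`. -/
noncomputable def cmax (rk : Finset (Fin p) → ℕ) (n : Fin p → ℕ) (i : Fin p) : ℤ :=
  if ∃ j, i < j ∧ inBase rk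
      (fun k => (n k : ℤ) - (if k = i then 1 else 0) + (if k = j then 1 else 0))
    then 1 else 0

/-- The cave polynomial of a polymatroid: the expansion of
`∑_{n ∈ ℕ^p, |n| = rk(𝒫)} 1_𝒫(n) ∏_{i=1}^{p-1} (1 - max_{i<j} 1_𝒫(n-e_i+e_j) tᵢ⁻¹) tⁿ`.
Each factor `(1 - cᵢ tᵢ⁻¹) tᵢ^{nᵢ}` is written as `tᵢ^{nᵢ} - cᵢ tᵢ^{nᵢ-1}`, which is
legitimate since `cᵢ ≠ 0` forces `nᵢ ≥ 1`; the factor for the last index is `tᵢ^{nᵢ}`. -/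
noncomputable def cavePoly (rk : Finset (Fin p) → ℕ) : MvPolynomial (Fin p) ℤ :=
  ∑ n ∈ Finset.Nat.antidiagonalTuple p (rk Finset.univ),
    MvPolynomial.C (baseInd rk (fun i => (n i : ℤ))) *
      ∏ i : Fin p,
        if (i : ℕ) < p - 1 then
          MvPolynomial.X i ^ (n i) -
            MvPolynomial.C (cmax rk n i) * MvPolynomial.X i ^ (n i - 1)
        else MvPolynomial.X i ^ (n i)

/-- A set `S ⊆ ℤ^q` is M-convex: it is nonempty, finite, and satisfies the
symmetric exchange property. -/
def MConvex {q : ℕ} (S : Set (Fin q → ℤ)) : Prop :=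
  S.Nonempty ∧ S.Finite ∧
    ∀ u ∈ S, ∀ v ∈ S, ∀ i, v i < u i →
      ∃ j, u j < v j ∧
        (fun k => u k - (if k = i then 1 else 0) + (if k = j then 1 else 0)) ∈ S

/-- The Möbius function `μ_𝒫 : ℤ^p → ℤ` of a polymatroid: `0` outside `I(𝒫)`,
`1` on `B(𝒫)`, and `1 - ∑_{w ∈ (n + ℤ_{>0}^p) ∩ I(𝒫)} μ_𝒫(w)` on `I(𝒫) \ B(𝒫)`.
(Every integer point of `I(𝒫)` lies in the box `0 ≤ w i ≤ rk {i}`; the redundant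
condition `∑ n < ∑ w` — automatic for `p ≥ 1` — ensures termination.) -/
noncomputable def mobius (rk : Finset (Fin p) → ℕ) (n : Fin p → ℤ) : ℤ :=
  if inIndep rk n then
    if inBase rk n then 1
    else
      1 - ∑ w ∈ ((Finset.Icc (fun _ => (0 : ℤ)) (fun i => (rk {i} : ℤ))).filter
            (fun w => (∀ i, n i < w i) ∧ (∑ i, n i) < (∑ i, w i) ∧ inIndep rk w)).attach,
          mobius rk w.1
  else 0
termination_by ((rk Finset.univ : ℤ) - ∑ i, n i).toNat
decreasing_by
  have hm := w.2
  simp only [Finset.mem_filter] at hm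
  have h2 : (∑ i, w.1 i) ≤ (rk Finset.univ : ℤ) := by
    simpa using hm.2.2.2.2 Finset.univ
  have _h1 : (∑ i, n i) < ∑ i, w.1 i := hm.2.2.1
  omega

/-- The base polytope `B(𝒫) ⊆ ℝ^p`. -/
def BaseSet (rk : Finset (Fin p) → ℕ) : Set (Fin p → ℝ) :=
  {v | (∀ i, 0 ≤ v i) ∧ (∑ i, v i = (rk Finset.univ : ℝ)) ∧
    ∀ J : Finset (Fin p), ∑ j ∈ J, v j ≤ (rk J : ℝ)}

/-- The rank function `rk_S(J) = max_{u ∈ S} ∑_{j∈J} u_j` of a (finite, nonempty)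
M-convex set `S ⊆ ℕ^p`. -/
noncomputable def rkOf (S : Set (Fin p → ℤ)) (J : Finset (Fin p)) : ℕ :=
  sSup ((fun u => (∑ j ∈ J, u j).toNat) '' S)

lemma mobius_of_not_indep {rk : Finset (Fin p) → ℕ} {n : Fin p → ℤ}
    (h : ¬ inIndep rk n) : mobius rk n = 0 := by
  rw [mobius]; simp [h]

lemma indep_mono_down {rk : Finset (Fin p) → ℕ} {n w : Fin p → ℤ}
    (hn : ∀ i, 0 ≤ n i) (hnw : ∀ i, n i ≤ w i) (hw : inIndep rk w) :
    inIndep rk n := by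
  refine ⟨hn, fun J => le_trans ?_ (hw.2 J)⟩
  exact Finset.sum_le_sum fun j _ => hnw j

lemma rk_le_sum_cage {m : Fin p → ℕ} {rk : Finset (Fin p) → ℕ}
    (hrk : IsPolymatroid m rk) (J : Finset (Fin p)) : rk J ≤ ∑ i ∈ J, m i := by
  classical
  induction J using Finset.induction_on with
  | empty => simp [hrk.1]
  | @insert i J hiJ ih =>
    have h1 : rk (insert i J) ≤ rk {i} + rk J := by
      have := hrk.2.2.1 {i} J
      have h0 : rk ({i} ∪ J) = rk (insert i J) := by rw [Finset.insert_eq]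
      omega
    have h2 : rk {i} ≤ m i := hrk.2.2.2 i
    rw [Finset.sum_insert hiJ]
    omega

/-- The key linear recursion for the Möbius function. -/
lemma mobius_rec (hp : 1 ≤ p) {m : Fin p → ℕ} {rk : Finset (Fin p) → ℕ}
    (hrk : IsPolymatroid m rk) {n : Fin p → ℤ} (hn : ∀ i, 0 ≤ n i) :
    mobius rk n = (if inIndep rk n then 1 else 0)
      - ∑ w ∈ (Finset.Icc (fun _ => (0:ℤ)) (fun i => (m i : ℤ))).filter
          (fun w => ∀ i, n i < w i), mobius rk w := by
  classical
  have hne : (Finset.univ : Finset (Fin p)).Nonempty := ⟨⟨0, hp⟩, Finset.mem_univ _⟩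
  have hsum_lt : ∀ w : Fin p → ℤ, (∀ i, n i < w i) → (∑ i, n i) < ∑ i, w i :=
    fun w hw => Finset.sum_lt_sum_of_nonempty hne (fun i _ => hw i)
  by_cases hI : inIndep rk n
  · by_cases hB : inBase rk n
    · rw [mobius]
      simp only [hI, hB, if_true]
      have hz : ∀ w ∈ (Finset.Icc (fun _ => (0:ℤ)) (fun i => (m i : ℤ))).filter
          (fun w => ∀ i, n i < w i), mobius rk w = 0 := by
        intro w hw
        simp only [Finset.mem_filter] at hw
        apply mobius_of_not_indep
        intro hIw
        have h1 : (∑ i, w i) ≤ (rk Finset.univ : ℤ) := by simpa using hIw.2 Finset.univ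
        have h2 := hsum_lt w hw.2
        rw [hB.2] at h2
        omega
      rw [Finset.sum_eq_zero hz]
      ring
    · rw [mobius]
      simp only [hI, hB, if_true, if_false]
      rw [Finset.sum_attach]
      congr 1
      apply Finset.sum_subset
      · intro w hw
        simp only [Finset.mem_filter, Finset.mem_Icc, Pi.le_def] at hw ⊢
        obtain ⟨⟨hw0, hwr⟩, hnw, _, hIw⟩ := hw
        refine ⟨⟨hw0, ?_⟩, hnw⟩
        intro i
        exact le_trans (hwr i) (by exact_mod_cast hrk.2.2.2 i)
      · intro w hw hnw
        simp only [Finset.mem_filter, Finset.mem_Icc, Pi.le_def] at hw hnw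
        apply mobius_of_not_indep
        intro hIw
        apply hnw
        refine ⟨⟨hw.1.1, fun i => ?_⟩, hw.2, hsum_lt w hw.2, hIw⟩
        simpa using hIw.2 {i}
  · rw [mobius_of_not_indep hI]
    simp only [hI, if_false]
    have hz : ∀ w ∈ (Finset.Icc (fun _ => (0:ℤ)) (fun i => (m i : ℤ))).filter
        (fun w => ∀ i, n i < w i), mobius rk w = 0 := by
      intro w hw
      simp only [Finset.mem_filter] at hw
      apply mobius_of_not_indep
      intro hIw
      exact hI (indep_mono_down hn (fun i => le_of_lt (hw.2 i)) hIw)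
    rw [Finset.sum_eq_zero hz]
    ring

lemma tight_union {rk : Finset (Fin p) → ℕ} {m : Fin p → ℕ} (hrk : IsPolymatroid m rk)
    {w : Fin p → ℤ} (hw : inIndep rk w) {J₁ J₂ : Finset (Fin p)}
    (h1 : ∑ j ∈ J₁, w j = (rk J₁ : ℤ)) (h2 : ∑ j ∈ J₂, w j = (rk J₂ : ℤ)) :
    ∑ j ∈ J₁ ∪ J₂, w j = (rk (J₁ ∪ J₂) : ℤ) := by
  have hsub : ((rk (J₁ ∩ J₂) : ℤ) + rk (J₁ ∪ J₂)) ≤ (rk J₁ : ℤ) + rk J₂ := by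
    exact_mod_cast hrk.2.2.1 J₁ J₂
  have hadd : (∑ j ∈ J₁ ∪ J₂, w j) + ∑ j ∈ J₁ ∩ J₂, w j
      = (∑ j ∈ J₁, w j) + ∑ j ∈ J₂, w j := Finset.sum_union_inter
  have hu := hw.2 (J₁ ∪ J₂)
  have hi := hw.2 (J₁ ∩ J₂)
  omega

lemma exists_augment {rk : Finset (Fin p) → ℕ} {m : Fin p → ℕ} (hrk : IsPolymatroid m rk)
    {w : Fin p → ℤ} (hw : inIndep rk w) (hlt : ∑ i, w i < (rk Finset.univ : ℤ)) :
    ∃ i, inIndep rk (fun j => w j + if j = i then 1 else 0) := by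
  classical
  set T : Finset (Finset (Fin p)) :=
    Finset.univ.filter (fun J => ∑ j ∈ J, w j = (rk J : ℤ)) with hT
  set U : Finset (Fin p) := T.sup id with hU
  have hTU : ∀ J ∈ T, J ⊆ U := fun J hJ => Finset.le_sup (f := id) hJ
  have hUtight : ∑ j ∈ U, w j = (rk U : ℤ) := by
    apply Finset.sup_induction (p := fun J => ∑ j ∈ J, w j = (rk J : ℤ))
    · simp [Finset.bot_eq_empty, hrk.1]
    · intro J₁ h1 J₂ h2
      exact tight_union hrk hw h1 h2
    · intro J hJ
      simpa [hT] using (Finset.mem_filter.mp hJ).2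
  have hUne : U ≠ Finset.univ := by
    intro h
    rw [h] at hUtight
    omega
  obtain ⟨i, _, hiU⟩ := Finset.not_subset.mp
    (fun h => hUne (Finset.eq_univ_iff_forall.mpr (fun x => h (Finset.mem_univ x))))
  refine ⟨i, fun j => ?_, fun J => ?_⟩
  · have := hw.1 j
    dsimp only
    split <;> omega
  · have hsplit : (∑ j ∈ J, (w j + if j = i then 1 else 0))
        = (∑ j ∈ J, w j) + (if i ∈ J then 1 else 0) := by
      rw [Finset.sum_add_distrib, Finset.sum_ite_eq' J i (fun _ => (1:ℤ))]
    rw [hsplit]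
    by_cases hiJ : i ∈ J
    · simp only [hiJ, if_true]
      have hle := hw.2 J
      rcases lt_or_eq_of_le hle with h | h
      · omega
      · exfalso
        exact hiU (hTU J (by simp [hT, h]) hiJ)
    · simpa [hiJ] using hw.2 J

lemma exists_base_ge {rk : Finset (Fin p) → ℕ} {m : Fin p → ℕ} (hrk : IsPolymatroid m rk)
    {w : Fin p → ℤ} (hw : inIndep rk w) :
    ∃ b, inBase rk b ∧ ∀ i, w i ≤ b i := by
  classical
  suffices h : ∀ d : ℕ, ∀ w : Fin p → ℤ, inIndep rk w →
      ((rk Finset.univ : ℤ) - ∑ i, w i).toNat ≤ d → ∃ b, inBase rk b ∧ ∀ i, w i ≤ b i by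
    exact h _ w hw le_rfl
  intro d
  induction d with
  | zero =>
    intro w hw hd
    have h1 : (∑ i, w i) ≤ (rk Finset.univ : ℤ) := by simpa using hw.2 Finset.univ
    exact ⟨w, ⟨hw, by omega⟩, fun i => le_rfl⟩
  | succ d ih =>
    intro w hw hd
    have h1 : (∑ i, w i) ≤ (rk Finset.univ : ℤ) := by simpa using hw.2 Finset.univ
    rcases eq_or_lt_of_le h1 with h | h
    · exact ⟨w, ⟨hw, h⟩, fun i => le_rfl⟩
    · obtain ⟨i, hi⟩ := exists_augment hrk hw h
      have hsum : (∑ j, (w j + if j = i then 1 else 0)) = (∑ j, w j) + 1 := by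
        rw [Finset.sum_add_distrib, Finset.sum_ite_eq' Finset.univ i (fun _ => (1:ℤ))]
        simp
      obtain ⟨b, hb, hwb⟩ := ih _ hi (by omega)
      refine ⟨b, hb, fun j => le_trans ?_ (hwb j)⟩
      split <;> omega

lemma indep_iff_base_real {rk : Finset (Fin p) → ℕ} {m : Fin p → ℕ}
    (hrk : IsPolymatroid m rk) {w : Fin p → ℤ} (hw0 : ∀ i, 0 ≤ w i) :
    inIndep rk w ↔ ∃ v ∈ BaseSet rk, ∀ i, (w i : ℝ) ≤ v i := by
  constructor
  · intro hw
    obtain ⟨b, hb, hwb⟩ := exists_base_ge hrk hw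
    refine ⟨fun i => (b i : ℝ), ⟨fun i => by dsimp only; exact_mod_cast hb.1.1 i, ?_, fun J => ?_⟩,
      fun i => by dsimp only; exact_mod_cast hwb i⟩
    · show ∑ i, (b i : ℝ) = _
      exact_mod_cast hb.2
    · show ∑ j ∈ J, (b j : ℝ) ≤ _
      exact_mod_cast hb.1.2 J
  · rintro ⟨v, hv, hwv⟩
    refine ⟨hw0, fun J => ?_⟩
    have h1 : ((∑ j ∈ J, w j : ℤ) : ℝ) ≤ ∑ j ∈ J, v j := by
      push_cast
      exact Finset.sum_le_sum fun j _ => hwv j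
    exact_mod_cast le_trans h1 (hv.2.2 J)

lemma euler_dim1 {k : ℕ} (S : Fin k → Set ℝ) (a : Fin k → ℤ)
    (hcpt : ∀ i, IsCompact (S i)) (hcvx : ∀ i, Convex ℝ (S i))
    (hrel : ∀ t : ℝ, ∑ i, a i * (if t ∈ S i then (1:ℤ) else 0) = 0) :
    ∑ i, a i * (if (S i).Nonempty then (1:ℤ) else 0) = 0 := by
  classical
  set α : Fin k → ℝ := fun i => sInf (S i) with hα
  set β : Fin k → ℝ := fun i => sSup (S i) with hβ
  have hmem : ∀ i, (S i).Nonempty → ∀ t : ℝ, (t ∈ S i ↔ α i ≤ t ∧ t ≤ β i) := by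
    intro i hne t
    constructor
    · intro ht
      exact ⟨csInf_le (hcpt i).bddBelow ht, le_csSup (hcpt i).bddAbove ht⟩
    · rintro ⟨h1, h2⟩
      have hαm : α i ∈ S i := (hcpt i).sInf_mem hne
      have hβm : β i ∈ S i := (hcpt i).sSup_mem hne
      exact ((hcvx i).ordConnected).out hαm hβm ⟨h1, h2⟩
  have hαβ : ∀ i, (S i).Nonempty → α i ≤ β i := by
    intro i hne
    obtain ⟨s0, hs0⟩ := hne
    exact le_trans (csInf_le (hcpt i).bddBelow hs0) (le_csSup (hcpt i).bddAbove hs0)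
  set E : Finset ℝ := Finset.image α Finset.univ ∪ Finset.image β Finset.univ with hE
  obtain ⟨ε, hε0, hεgap⟩ :
      ∃ ε : ℝ, 0 < ε ∧ ∀ x ∈ E, ∀ y ∈ E, y < x → ε < x - y := by
    set D : Finset ℝ := ((E ×ˢ E).image fun q => q.1 - q.2).filter (fun z => 0 < z) with hD
    by_cases hDne : D.Nonempty
    · have hmin := D.min'_mem hDne
      have hminpos : 0 < D.min' hDne := (Finset.mem_filter.mp hmin).2
      refine ⟨D.min' hDne / 2, by linarith, ?_⟩
      intro x hx y hy hyx
      have hxy : x - y ∈ D := by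
        apply Finset.mem_filter.mpr
        exact ⟨Finset.mem_image.mpr ⟨(x, y), Finset.mem_product.mpr ⟨hx, hy⟩, rfl⟩,
          by linarith⟩
      have := D.min'_le _ hxy
      linarith
    · refine ⟨1, one_pos, ?_⟩
      intro x hx y hy hyx
      exfalso
      apply hDne
      refine ⟨x - y, Finset.mem_filter.mpr
        ⟨Finset.mem_image.mpr ⟨(x, y), Finset.mem_product.mpr ⟨hx, hy⟩, rfl⟩, by linarith⟩⟩
  set T : Finset ℝ := Finset.image α (Finset.univ.filter (fun i => (S i).Nonempty)) with hT
  have hTE : ∀ t ∈ T, t ∈ E := by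
    intro t ht
    rcases Finset.mem_image.mp ht with ⟨j, _, rfl⟩
    exact Finset.mem_union_left _ (Finset.mem_image.mpr ⟨j, Finset.mem_univ j, rfl⟩)
  have key : ∀ i, (∑ t ∈ T, ((if t ∈ S i then (1:ℤ) else 0) -
      (if t - ε ∈ S i then (1:ℤ) else 0))) = (if (S i).Nonempty then (1:ℤ) else 0) := by
    intro i
    by_cases hne : (S i).Nonempty
    · simp only [hne, if_true]
      have hstep : ∀ t ∈ T, ((if t ∈ S i then (1:ℤ) else 0) -
          (if t - ε ∈ S i then (1:ℤ) else 0)) = (if t = α i then (1:ℤ) else 0) := by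
        intro t htT
        have htE : t ∈ E := hTE t htT
        have hαE : α i ∈ E := Finset.mem_union_left _
          (Finset.mem_image.mpr ⟨i, Finset.mem_univ i, rfl⟩)
        have hβE : β i ∈ E := Finset.mem_union_right _
          (Finset.mem_image.mpr ⟨i, Finset.mem_univ i, rfl⟩)
        by_cases ht : t = α i
        · have h1 : α i ∈ S i := (hmem i hne _).mpr ⟨le_rfl, hαβ i hne⟩
          have h2 : α i - ε ∉ S i := by
            intro hc
            have := ((hmem i hne _).mp hc).1
            linarith
          simp [ht, h1, h2]
        · simp only [ht, if_false]
          by_cases h1 : t ∈ S i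
          · obtain ⟨ha, hb⟩ := (hmem i hne t).mp h1
            have hlt : α i < t := lt_of_le_of_ne ha (Ne.symm ht)
            have hgap := hεgap t htE (α i) hαE hlt
            have h2 : t - ε ∈ S i := (hmem i hne _).mpr ⟨by linarith, by linarith⟩
            simp [h1, h2]
          · have h2 : t - ε ∉ S i := by
              intro hc
              obtain ⟨ha, hb⟩ := (hmem i hne _).mp hc
              apply h1
              refine (hmem i hne t).mpr ⟨by linarith, ?_⟩
              by_contra hbt
              push_neg at hbt
              have := hεgap t htE (β i) hβE hbt
              linarith
            simp [h1, h2]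
      rw [Finset.sum_congr rfl hstep, Finset.sum_ite_eq' T (α i) (fun _ => (1:ℤ))]
      have : α i ∈ T := Finset.mem_image.mpr
        ⟨i, Finset.mem_filter.mpr ⟨Finset.mem_univ i, hne⟩, rfl⟩
      simp [this]
    · simp only [hne, if_false]
      apply Finset.sum_eq_zero
      intro t _
      have hSe : S i = ∅ := Set.not_nonempty_iff_eq_empty.mp hne
      simp [hSe]
  calc ∑ i, a i * (if (S i).Nonempty then (1:ℤ) else 0)
      = ∑ i, a i * ∑ t ∈ T, ((if t ∈ S i then (1:ℤ) else 0) -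
          (if t - ε ∈ S i then (1:ℤ) else 0)) := by
        apply Finset.sum_congr rfl
        intro i _
        rw [key i]
    _ = ∑ t ∈ T, ((∑ i, a i * (if t ∈ S i then (1:ℤ) else 0)) -
          (∑ i, a i * (if t - ε ∈ S i then (1:ℤ) else 0))) := by
        simp_rw [Finset.mul_sum, mul_sub]
        rw [Finset.sum_comm]
        apply Finset.sum_congr rfl
        intro t _
        rw [Finset.sum_sub_distrib]
    _ = 0 := by
        apply Finset.sum_eq_zero
        intro t _
        rw [hrel t, hrel (t - ε)]
        ring

lemma euler_general {k : ℕ} : ∀ (q : ℕ) (K : Fin k → Set (Fin q → ℝ)) (a : Fin k → ℤ),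
    (∀ i, IsCompact (K i)) → (∀ i, Convex ℝ (K i)) →
    (∀ v, ∑ i, a i * (if v ∈ K i then (1:ℤ) else 0) = 0) →
    ∑ i, a i * (if (K i).Nonempty then (1:ℤ) else 0) = 0 := by
  intro q
  induction q with
  | zero =>
    intro K a _ _ hrel
    have h0 : (∑ i, a i * (if (K i).Nonempty then (1:ℤ) else 0))
        = ∑ i, a i * (if (fun x : Fin 0 => x.elim0) ∈ K i then (1:ℤ) else 0) := by
      apply Finset.sum_congr rfl
      intro i _
      congr 1
      apply if_congr _ rfl rfl
      constructor
      · rintro ⟨v, hv⟩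
        have hv' : v = fun x => x.elim0 := funext fun x => x.elim0
        rwa [hv'] at hv
      · intro h; exact ⟨_, h⟩
    rw [h0]
    exact hrel _
  | succ q ih =>
    intro K a hcpt hcvx hrel
    set K' : Fin k → Set (Fin q → ℝ) := fun i => (fun v => Fin.init v) '' K i with hK'
    have hcontinit : Continuous (fun v : Fin (q+1) → ℝ => Fin.init v) :=
      continuous_pi fun j => continuous_apply _
    have hcpt' : ∀ i, IsCompact (K' i) := fun i => (hcpt i).image hcontinit
    have hcvx' : ∀ i, Convex ℝ (K' i) := by
      intro i
      have := (hcvx i).linear_image (LinearMap.funLeft ℝ ℝ Fin.castSucc)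
      exact this
    have hsnoc_cont : ∀ y : Fin q → ℝ, Continuous (fun t : ℝ => (Fin.snoc y t : Fin (q+1) → ℝ)) := by
      intro y
      apply continuous_pi
      intro j
      refine Fin.lastCases ?_ ?_ j
      · simp only [Fin.snoc_last]; exact continuous_id
      · intro j'
        simp only [Fin.snoc_castSucc]
        exact continuous_const
    have hmemK' : ∀ (i : Fin k) (y : Fin q → ℝ),
        y ∈ K' i ↔ ∃ t : ℝ, (Fin.snoc y t : Fin (q+1) → ℝ) ∈ K i := by
      intro i y
      constructor
      · rintro ⟨v, hv, rfl⟩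
        exact ⟨v (Fin.last q), by rwa [Fin.snoc_init_self]⟩
      · rintro ⟨t, ht⟩
        exact ⟨Fin.snoc y t, ht, Fin.init_snoc _ _⟩
    have hrel' : ∀ y : Fin q → ℝ, ∑ i, a i * (if y ∈ K' i then (1:ℤ) else 0) = 0 := by
      intro y
      set S : Fin k → Set ℝ := fun i => {t : ℝ | (Fin.snoc y t : Fin (q+1) → ℝ) ∈ K i} with hS
      have hScl : ∀ i, IsClosed (S i) := fun i =>
        (hcpt i).isClosed.preimage (hsnoc_cont y)
      have hScpt : ∀ i, IsCompact (S i) := by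
        intro i
        apply IsCompact.of_isClosed_subset ((hcpt i).image (continuous_apply (Fin.last q)))
          (hScl i)
        intro t ht
        exact ⟨(Fin.snoc y t : Fin (q+1) → ℝ), ht, Fin.snoc_last _ _⟩
      have hScvx : ∀ i, Convex ℝ (S i) := by
        intro i t1 ht1 t2 ht2 c d hc hd hcd
        have hkey : (Fin.snoc y (c • t1 + d • t2) : Fin (q+1) → ℝ) = c • (Fin.snoc y t1 : Fin (q+1) → ℝ) + d • (Fin.snoc y t2 : Fin (q+1) → ℝ) := by
          funext j
          refine Fin.lastCases ?_ ?_ j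
          · simp [Fin.snoc_last]
          · intro j'
            simp only [Fin.snoc_castSucc, Pi.add_apply, Pi.smul_apply, smul_eq_mul]
            rw [← add_mul, hcd, one_mul]
        show (Fin.snoc y (c • t1 + d • t2) : Fin (q+1) → ℝ) ∈ K i
        rw [hkey]
        exact hcvx i ht1 ht2 hc hd hcd
      have h1 := euler_dim1 S a hScpt hScvx (fun t => hrel (Fin.snoc y t : Fin (q+1) → ℝ))
      have h2 : (∑ i, a i * (if y ∈ K' i then (1:ℤ) else 0))
          = ∑ i, a i * (if (S i).Nonempty then (1:ℤ) else 0) := by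
        apply Finset.sum_congr rfl
        intro i _
        congr 1
        apply if_congr _ rfl rfl
        rw [hmemK' i y]
        exact ⟨fun ⟨t, ht⟩ => ⟨t, ht⟩, fun ⟨t, ht⟩ => ⟨t, ht⟩⟩
      rw [h2]
      exact h1
    have hmain := ih K' a hcpt' hcvx' hrel'
    have h3 : (∑ i, a i * (if (K i).Nonempty then (1:ℤ) else 0))
        = ∑ i, a i * (if (K' i).Nonempty then (1:ℤ) else 0) := by
      apply Finset.sum_congr rfl
      intro i _
      congr 1
      apply if_congr _ rfl rfl
      constructor
      · rintro ⟨v, hv⟩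
        exact ⟨Fin.init v, v, hv, rfl⟩
      · rintro ⟨y, v, hv, _⟩
        exact ⟨v, hv⟩
    rw [h3]
    exact hmain

lemma indep_valuative {k : ℕ} (m : Fin p → ℕ)
    (P : Fin k → Finset (Fin p) → ℕ) (hP : ∀ i, IsPolymatroid m (P i))
    (a : Fin k → ℤ)
    (hval : ∀ v : Fin p → ℝ,
      (∑ i, a i * (if v ∈ BaseSet (P i) then (1 : ℤ) else 0)) = 0)
    (w : Fin p → ℤ) (hw0 : ∀ i, 0 ≤ w i) :
    ∑ i, a i * (if inIndep (P i) w then (1:ℤ) else 0) = 0 := by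
  classical
  set K : Fin k → Set (Fin p → ℝ) :=
    fun i => {v | v ∈ BaseSet (P i) ∧ ∀ j, (w j : ℝ) ≤ v j} with hK
  have hKdecomp : ∀ i, K i = (⋂ j, {v : Fin p → ℝ | 0 ≤ v j}) ∩
      ({v : Fin p → ℝ | ∑ j, v j = (P i Finset.univ : ℝ)} ∩
        ((⋂ J : Finset (Fin p), {v : Fin p → ℝ | ∑ j ∈ J, v j ≤ (P i J : ℝ)}) ∩
          ⋂ j, {v : Fin p → ℝ | (w j : ℝ) ≤ v j})) := by
    intro i
    ext v
    simp only [hK, Set.mem_setOf_eq, Set.mem_inter_iff, Set.mem_iInter, BaseSet]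
    tauto
  have hlin1 : ∀ j : Fin p, IsLinearMap ℝ (fun v : Fin p → ℝ => v j) :=
    fun j => ⟨fun _ _ => rfl, fun _ _ => rfl⟩
  have hlin2 : ∀ J : Finset (Fin p), IsLinearMap ℝ (fun v : Fin p → ℝ => ∑ j ∈ J, v j) := by
    intro J
    constructor
    · intro x y; simp [Finset.sum_add_distrib]
    · intro c x; simp [Finset.mul_sum]
  have hcl : ∀ i, IsClosed (K i) := by
    intro i
    rw [hKdecomp i]
    refine IsClosed.inter (isClosed_iInter fun j =>
        isClosed_le continuous_const (continuous_apply j))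
      (IsClosed.inter (isClosed_eq (continuous_finset_sum _ fun j _ => continuous_apply j)
          continuous_const)
        (IsClosed.inter (isClosed_iInter fun J =>
            isClosed_le (continuous_finset_sum _ fun j _ => continuous_apply j)
              continuous_const)
          (isClosed_iInter fun j => isClosed_le continuous_const (continuous_apply j))))
  have hcpt : ∀ i, IsCompact (K i) := by
    intro i
    apply IsCompact.of_isClosed_subset
      (isCompact_Icc (a := fun _ : Fin p => (0:ℝ)) (b := fun j => (P i {j} : ℝ)))
      (hcl i)
    intro v hv
    constructor
    · intro j; exact hv.1.1 j
    · intro j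
      have := hv.1.2.2 {j}
      simpa using this
  have hcvx : ∀ i, Convex ℝ (K i) := by
    intro i
    rw [hKdecomp i]
    refine Convex.inter (convex_iInter fun j => convex_halfSpace_ge (hlin1 j) 0)
      (Convex.inter (convex_hyperplane (hlin2 Finset.univ) _)
        (Convex.inter (convex_iInter fun J => convex_halfSpace_le (hlin2 J) _)
          (convex_iInter fun j => convex_halfSpace_ge (hlin1 j) _)))
  have hrelK : ∀ v : Fin p → ℝ, ∑ i, a i * (if v ∈ K i then (1:ℤ) else 0) = 0 := by
    intro v
    by_cases hv : ∀ j, (w j : ℝ) ≤ v j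
    · have : (∑ i, a i * (if v ∈ K i then (1:ℤ) else 0))
          = ∑ i, a i * (if v ∈ BaseSet (P i) then (1:ℤ) else 0) := by
        apply Finset.sum_congr rfl
        intro i _
        congr 1
        apply if_congr _ rfl rfl
        exact ⟨fun h => h.1, fun h => ⟨h, hv⟩⟩
      rw [this]; exact hval v
    · apply Finset.sum_eq_zero
      intro i _
      have : v ∉ K i := fun h => hv h.2
      simp [this]
  have hmain := euler_general p K a hcpt hcvx (fun v => by convert hrelK v)
  have hiff : ∀ i, ((K i).Nonempty ↔ inIndep (P i) w) := by
    intro i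
    rw [indep_iff_base_real (hP i) hw0]
    constructor
    · rintro ⟨v, hv1, hv2⟩; exact ⟨v, hv1, hv2⟩
    · rintro ⟨v, hv1, hv2⟩; exact ⟨v, hv1, hv2⟩
  have h4 : (∑ i, a i * (if inIndep (P i) w then (1:ℤ) else 0))
      = ∑ i, a i * (if (K i).Nonempty then (1:ℤ) else 0) :=
    Finset.sum_congr rfl (fun i _ => by congr 1; exact if_congr (hiff i).symm rfl rfl)
  rw [h4]
  exact hmain

/-- For every `n ∈ ℤ^p`, the function `𝒫 ↦ μ_𝒫(n)` is valuative:
if a `ℤ`-linear combination of indicator functions of base polytopes of polymatroids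
(with common cage `m`) vanishes identically on `ℝ^p`, then the same combination of
Möbius values at `n` vanishes. -/
theorem mobius_valuative
    (p : ℕ) (hp : 1 ≤ p) (m : Fin p → ℕ) (n : Fin p → ℤ) (k : ℕ)
    (P : Fin k → Finset (Fin p) → ℕ) (hP : ∀ i, IsPolymatroid m (P i))
    (a : Fin k → ℤ)
    (hval : ∀ v : Fin p → ℝ,
      (∑ i, a i * (if v ∈ BaseSet (P i) then (1 : ℤ) else 0)) = 0) :
    (∑ i, a i * mobius (P i) n) = 0 := by
  classical
  have hne : (Finset.univ : Finset (Fin p)).Nonempty := ⟨⟨0, hp⟩, Finset.mem_univ _⟩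
  by_cases hn0 : ∀ i, 0 ≤ n i
  · have hbigcase : ∀ n : Fin p → ℤ, (∑ i, (m i : ℤ)) < (∑ i, n i) →
        ∑ i, a i * mobius (P i) n = 0 := by
      intro n hbig
      apply Finset.sum_eq_zero
      intro i _
      have hni : ¬ inIndep (P i) n := by
        intro hI
        have h1 : (∑ j, n j) ≤ (P i Finset.univ : ℤ) := by
          simpa using hI.2 Finset.univ
        have h2 : (P i Finset.univ : ℤ) ≤ ∑ j, (m j : ℤ) := by
          have := rk_le_sum_cage (hP i) Finset.univ
          exact_mod_cast this
        omega
      rw [mobius_of_not_indep hni, mul_zero]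
    have hind : ∀ d : ℕ, ∀ n : Fin p → ℤ, (∀ i, 0 ≤ n i) →
        ((∑ i, (m i : ℤ)) + 1 - ∑ i, n i).toNat ≤ d →
        ∑ i, a i * mobius (P i) n = 0 := by
      intro d
      induction d with
      | zero =>
        intro n _ ht
        exact hbigcase n (by omega)
      | succ d ih =>
        intro n hn0 ht
        by_cases hbig : (∑ i, (m i : ℤ)) < ∑ i, n i
        · exact hbigcase n hbig
        · push_neg at hbig
          have hrec : ∀ i : Fin k, mobius (P i) n
              = (if inIndep (P i) n then (1:ℤ) else 0)
                - ∑ w ∈ (Finset.Icc (fun _ => (0:ℤ)) (fun j => (m j : ℤ))).filter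
                    (fun w => ∀ j, n j < w j), mobius (P i) w :=
            fun i => mobius_rec hp (hP i) hn0
          have hsplit : (∑ i, a i * mobius (P i) n)
              = (∑ i, a i * (if inIndep (P i) n then (1:ℤ) else 0))
                - ∑ w ∈ (Finset.Icc (fun _ => (0:ℤ)) (fun j => (m j : ℤ))).filter
                    (fun w => ∀ j, n j < w j), (∑ i, a i * mobius (P i) w) := by
            rw [Finset.sum_comm]
            rw [← Finset.sum_sub_distrib]
            apply Finset.sum_congr rfl
            intro i _
            rw [hrec i, mul_sub, Finset.mul_sum]
          rw [hsplit, indep_valuative m P hP a hval n hn0]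
          have hz : ∀ w ∈ (Finset.Icc (fun _ => (0:ℤ)) (fun j => (m j : ℤ))).filter
              (fun w => ∀ j, n j < w j), (∑ i, a i * mobius (P i) w) = 0 := by
            intro w hw
            simp only [Finset.mem_filter, Finset.mem_Icc, Pi.le_def] at hw
            obtain ⟨⟨hw0, hwm⟩, hnw⟩ := hw
            have hsumlt : (∑ j, n j) < ∑ j, w j :=
              Finset.sum_lt_sum_of_nonempty hne (fun j _ => hnw j)
            have hd : ((∑ i, (m i : ℤ)) + 1 - ∑ i, w i).toNat ≤ d := by
              clear hrec hsplit hw0 hwm hnw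
              omega
            exact ih w (fun j => hw0 j) hd
          rw [Finset.sum_eq_zero hz]
          ring
    exact hind _ n hn0 le_rfl
  · apply Finset.sum_eq_zero
    intro i _
    have hni : ¬ inIndep (P i) n := fun hI => hn0 hI.1
    rw [mobius_of_not_indep hni, mul_zero]

end CavePaper
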